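/- Fix s ∈ X_fin. Then ∑_{k=0}^∞ m^k/(u_{2k+1}(s) − u_{2k}(s)) = +∞ in [0,∞], with the convention that a term with zero denominator is +∞. Consequently, R_N(s) → +∞ and Cap_N(s) := 1/R_N(s) → 0 as N → ∞. -/

import Mathlib

open Filter Topology
open scoped BigOperators ComplexOrder ENNReal

/-- A kernel `J : X × X → ℂ` is positive definite: every finite Gram sum
`∑ conj (c α) * c β * J (s α) (s β)` is a nonnegative real number
(using the partial order on `ℂ`). -/
def IsPD {X : Type*} (J : X → X → ℂ) : Prop :=
  ∀ (r : ℕ) (c : Fin r → ℂ) (p : Fin r → X),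
    0 ≤ ∑ α, ∑ β, (starRingEnd ℂ) (c α) * c β * J (p α) (p β)

/-- The pullback operator `(LJ)(s,t) = ∑ i, J (φ i s) (φ i t)`. -/
noncomputable def pullback {X : Type*} (m : ℕ) (φ : Fin m → X → X) (J : X → X → ℂ) :
    X → X → ℂ :=
  fun s t => ∑ i, J (φ i s) (φ i t)

/-- For a word `w = i₁⋯iₙ ∈ {1,…,m}ⁿ`, `phiW φ w = φ_{iₙ} ∘ ⋯ ∘ φ_{i₁}`. -/
def phiW {X : Type*} {m : ℕ} (φ : Fin m → X → X) : {n : ℕ} → (Fin n → Fin m) → X → X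
  | 0, _, x => x
  | n + 1, w, x => φ (w (Fin.last n)) (phiW φ (fun i => w i.castSucc) x)

/-- The tower `K₀ = K`, `K_{n+1} = L Kₙ`. -/
noncomputable def tower {X : Type*} (m : ℕ) (φ : Fin m → X → X) (K : X → X → ℂ) :
    ℕ → X → X → ℂ
  | 0 => K
  | n + 1 => pullback m φ (tower m φ K n)

/-- The diagonal `uₙ(s) = Kₙ(s,s)` (a real number, as `Kₙ` is p.d.). -/
noncomputable def diag {X : Type*} (m : ℕ) (φ : Fin m → X → X) (K : X → X → ℂ)
    (n : ℕ) (s : X) : ℝ :=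
  (tower m φ K n s s).re

/-- The diagonal increment `a_s(w) = u_{|w|+1}(φ_w s) − u_{|w|}(φ_w s)`. -/
noncomputable def incr {X : Type*} (m : ℕ) (φ : Fin m → X → X) (K : X → X → ℂ)
    (s : X) {k : ℕ} (w : Fin k → Fin m) : ℝ :=
  diag m φ K (k + 1) (phiW φ w s) - diag m φ K k (phiW φ w s)

/-- A unit flow to depth `N` on the rooted `m`-ary word tree:
`θ k w i` is the flow through the edge `(w, wi)` with `|w| = k`. -/
def IsUnitFlow (m N : ℕ) (θ : (k : ℕ) → (Fin k → Fin m) → Fin m → ℝ) : Prop :=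
  (∀ k, k < N → ∀ (w : Fin k → Fin m) (i : Fin m), 0 ≤ θ k w i) ∧
  (∑ i : Fin m, θ 0 (fun j => j.elim0) i = 1) ∧
  (∀ k, k + 1 < N → ∀ (w : Fin k → Fin m) (i : Fin m),
    θ k w i = ∑ j : Fin m, θ (k + 1) (Fin.snoc w i) j)

/-- The energy `𝔈_s(θ) = ∑_e θ(e)² / c_s(e) ∈ [0,∞]`, where the edge `(w,wi)`
has conductance `c_s(w,wi) = a_s(w)/m^{|w|+1}` (with `0/0 = 0` and `x/0 = ∞`
for `x > 0`, as in `ℝ≥0∞`). -/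
noncomputable def energy {X : Type*} (m : ℕ) (φ : Fin m → X → X) (K : X → X → ℂ)
    (s : X) (N : ℕ) (θ : (k : ℕ) → (Fin k → Fin m) → Fin m → ℝ) : ℝ≥0∞ :=
  ∑ k ∈ Finset.range N, ∑ w : Fin k → Fin m, ∑ i : Fin m,
    ENNReal.ofReal (θ k w i) ^ 2 / ENNReal.ofReal (incr m φ K s w / (m : ℝ) ^ (k + 1))

/-- The effective resistance `R_N(s)`: infimum of the energy over unit flows to depth `N`. -/
noncomputable def resistance {X : Type*} (m : ℕ) (φ : Fin m → X → X) (K : X → X → ℂ)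
    (s : X) (N : ℕ) : ℝ≥0∞ :=
  ⨅ (θ : (k : ℕ) → (Fin k → Fin m) → Fin m → ℝ) (_ : IsUnitFlow m N θ),
    energy m φ K s N θ

/-- The scalar series `S(s) = ∑ₖ m^k / (u_{2k+1}(s) − u_{2k}(s)) ∈ [0,∞]`
(a term with zero denominator being `+∞`). -/
noncomputable def Sser {X : Type*} (m : ℕ) (φ : Fin m → X → X) (K : X → X → ℂ)
    (s : X) : ℝ≥0∞ :=
  ∑' k : ℕ,
    (m : ℝ≥0∞) ^ k / ENNReal.ofReal (diag m φ K (2 * k + 1) s - diag m φ K (2 * k) s)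

/-- The finiteness locus `X_fin = {s : u_∞(s) = lim uₙ(s) < ∞}` (the monotone
sequence `uₙ(s)` has a finite limit). -/
def Xfin {X : Type*} (m : ℕ) (φ : Fin m → X → X) (K : X → X → ℂ) : Set X :=
  {s | ∃ l : ℝ, Filter.Tendsto (fun n => diag m φ K n s) Filter.atTop (nhds l)}


section AuxPD
variable {X : Type*} {m : ℕ} {φ : Fin m → X → X} {K : X → X → ℂ}

lemma isPD_pullback {J : X → X → ℂ} (hJ : IsPD J) : IsPD (pullback m φ J) := by
  intro r c p
  have h : (∑ i : Fin m, ∑ α, ∑ β, (starRingEnd ℂ) (c α) * c β * J (φ i (p α)) (φ i (p β)))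
      = ∑ α, ∑ β, (starRingEnd ℂ) (c α) * c β * pullback m φ J (p α) (p β) := by
    rw [Finset.sum_comm]
    refine Finset.sum_congr rfl fun α _ => ?_
    rw [Finset.sum_comm]
    refine Finset.sum_congr rfl fun β _ => ?_
    simp [pullback, Finset.mul_sum]
  rw [← h]
  exact Finset.sum_nonneg fun i _ => hJ r c fun a => φ i (p a)

lemma pullback_sub (J J' : X → X → ℂ) :
    pullback m φ (fun s t => J s t - J' s t)
      = fun s t => pullback m φ J s t - pullback m φ J' s t := by
  funext s t
  simp [pullback, Finset.sum_sub_distrib]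

lemma isPD_diff (hsub : IsPD (fun s t => pullback m φ K s t - K s t)) (n : ℕ) :
    IsPD (fun s t => tower m φ K (n + 1) s t - tower m φ K n s t) := by
  induction n with
  | zero => exact hsub
  | succ n ih =>
      have := isPD_pullback (φ := φ) ih
      rwa [pullback_sub] at this

lemma nonneg_re_of_pd {J : X → X → ℂ} (hJ : IsPD J) (x : X) : 0 ≤ (J x x).re := by
  have h := hJ 1 (fun _ => 1) (fun _ => x)
  simp only [Fin.sum_univ_one, map_one, one_mul] at h
  exact (Complex.le_def.mp h).1

lemma incr_nonneg (hsub : IsPD (fun s t => pullback m φ K s t - K s t))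
    {s : X} {k : ℕ} (w : Fin k → Fin m) : 0 ≤ incr m φ K s w := by
  have h := nonneg_re_of_pd (isPD_diff hsub k) (phiW φ w s)
  simpa [incr, diag, Complex.sub_re] using h

lemma diag_succ (n : ℕ) (x : X) :
    diag m φ K (n + 1) x = ∑ i : Fin m, diag m φ K n (φ i x) := by
  simp [diag, tower, pullback, Complex.re_sum]

lemma phiW_snoc {k : ℕ} (w : Fin k → Fin m) (i : Fin m) (x : X) :
    phiW φ (Fin.snoc w i) x = φ i (phiW φ w x) := by
  simp [phiW]

def mySnocEquiv (m k : ℕ) : ((Fin k → Fin m) × Fin m) ≃ (Fin (k + 1) → Fin m) where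
  toFun p := Fin.snoc p.1 p.2
  invFun w := (fun i => w i.castSucc, w (Fin.last k))
  left_inv p := by simp
  right_inv w := by funext j; cases j using Fin.lastCases <;> simp

lemma sum_diag (k : ℕ) (n : ℕ) (s : X) :
    ∑ w : Fin k → Fin m, diag m φ K n (phiW φ w s) = diag m φ K (n + k) s := by
  induction k generalizing n with
  | zero =>
      rw [Fintype.sum_unique]
      rfl
  | succ k ih =>
      rw [← Equiv.sum_comp (mySnocEquiv m k) (fun w => diag m φ K n (phiW φ w s))]
      simp only [mySnocEquiv, Equiv.coe_fn_mk]
      rw [Fintype.sum_prod_type]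
      simp only [phiW_snoc]
      simp only [← diag_succ]
      rw [ih (n + 1)]
      congr 1
      omega

end AuxPD

lemma cs_cut {ι : Type*} [Fintype ι] {θ c : ι → ℝ} (hθ : ∀ i, 0 ≤ θ i) (hc : ∀ i, 0 ≤ c i)
    (hsum : ∑ i, θ i = 1) :
    (∑ i, ENNReal.ofReal (c i))⁻¹ ≤ ∑ i, ENNReal.ofReal (θ i) ^ 2 / ENNReal.ofReal (c i) := by
  by_cases hz : ∃ i, c i = 0 ∧ θ i ≠ 0
  · obtain ⟨i, hci, hθi⟩ := hz
    have hθipos : 0 < θ i := lt_of_le_of_ne (hθ i) (Ne.symm hθi)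
    have hne0 : ENNReal.ofReal (θ i) ≠ 0 := by
      simp only [ne_eq, ENNReal.ofReal_eq_zero, not_le]
      exact hθipos
    have htop : ENNReal.ofReal (θ i) ^ 2 / ENNReal.ofReal (c i) = ⊤ := by
      rw [hci, ENNReal.ofReal_zero, ENNReal.div_zero (pow_ne_zero 2 hne0)]
    refine le_top.trans_eq ?_
    exact (ENNReal.sum_eq_top.2 ⟨i, Finset.mem_univ i, htop⟩).symm
  · push_neg at hz
    set sP : Finset ι := Finset.univ.filter (fun i => 0 < c i) with hsP_def
    have hmem : ∀ i, i ∈ sP ↔ 0 < c i := by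
      intro i; simp [hsP_def]
    have hθ0 : ∀ i ∉ sP, θ i = 0 := by
      intro i hi
      have h1 : ¬ 0 < c i := fun h => hi ((hmem i).2 h)
      exact hz i (le_antisymm (not_lt.1 h1) (hc i))
    have hsum' : ∑ i ∈ sP, θ i = 1 := by
      rw [← hsum]
      exact Finset.sum_subset (Finset.subset_univ _) (fun i _ hi => hθ0 i hi)
    have hCS := Finset.sq_sum_div_le_sum_sq_div sP θ (fun i hi => (hmem i).1 hi)
    rw [hsum', one_pow] at hCS
    have hne : sP.Nonempty := by
      rcases Finset.eq_empty_or_nonempty sP with h | h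
      · rw [h, Finset.sum_empty] at hsum'; norm_num at hsum'
      · exact h
    have hBpos : 0 < ∑ i ∈ sP, c i := Finset.sum_pos (fun i hi => (hmem i).1 hi) hne
    have hB' : 0 < ∑ i, c i :=
      lt_of_lt_of_le hBpos (Finset.sum_le_sum_of_subset_of_nonneg (Finset.subset_univ _)
        (fun i _ _ => hc i))
    have h2 : (∑ i, c i)⁻¹ ≤ ∑ i ∈ sP, θ i ^ 2 / c i := by
      refine le_trans ?_ hCS
      rw [one_div]
      exact inv_anti₀ hBpos (Finset.sum_le_sum_of_subset_of_nonneg (Finset.subset_univ _)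
        (fun i _ _ => hc i))
    have h1 : (∑ i, ENNReal.ofReal (c i)) = ENNReal.ofReal (∑ i, c i) :=
      (ENNReal.ofReal_sum_of_nonneg (fun i _ => hc i)).symm
    rw [h1, ← ENNReal.ofReal_inv_of_pos hB']
    calc ENNReal.ofReal ((∑ i, c i)⁻¹)
        ≤ ENNReal.ofReal (∑ i ∈ sP, θ i ^ 2 / c i) := ENNReal.ofReal_le_ofReal h2
      _ = ∑ i ∈ sP, ENNReal.ofReal (θ i ^ 2 / c i) :=
          ENNReal.ofReal_sum_of_nonneg (fun i hi => div_nonneg (sq_nonneg _) (hc i))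
      _ ≤ ∑ i ∈ sP, ENNReal.ofReal (θ i) ^ 2 / ENNReal.ofReal (c i) := by
          refine Finset.sum_le_sum fun i hi => ?_
          rw [ENNReal.ofReal_div_of_pos ((hmem i).1 hi), ENNReal.ofReal_pow (hθ i)]
      _ ≤ ∑ i, ENNReal.ofReal (θ i) ^ 2 / ENNReal.ofReal (c i) :=
          Finset.sum_le_sum_of_subset (Finset.subset_univ _)

lemma flow_total {m N : ℕ} {θ : (k : ℕ) → (Fin k → Fin m) → Fin m → ℝ}
    (h : IsUnitFlow m N θ) : ∀ k, k < N → ∑ w : Fin k → Fin m, ∑ i : Fin m, θ k w i = 1 := by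
  intro k
  induction k with
  | zero =>
      intro _
      rw [Fintype.sum_unique]
      rw [show (default : Fin 0 → Fin m) = fun j => j.elim0 from Subsingleton.elim _ _]
      exact h.2.1
  | succ k ih =>
      intro hk
      rw [← Equiv.sum_comp (mySnocEquiv m k) (fun w => ∑ j : Fin m, θ (k + 1) w j)]
      simp only [mySnocEquiv, Equiv.coe_fn_mk]
      rw [Fintype.sum_prod_type]
      calc (∑ w : Fin k → Fin m, ∑ i : Fin m, ∑ j : Fin m, θ (k + 1) (Fin.snoc w i) j)
          = ∑ w : Fin k → Fin m, ∑ i : Fin m, θ k w i :=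
            Finset.sum_congr rfl fun w _ => Finset.sum_congr rfl fun i _ =>
              (h.2.2 k hk w i).symm
        _ = 1 := ih (by omega)

/-- For `s ∈ X_fin`, the scalar series `S(s)` diverges; consequently
`R_N(s) → ∞` and `Cap_N(s) = 1/R_N(s) → 0` as `N → ∞`. -/
theorem stmt9 {X : Type*} (m : ℕ) (hm : 1 ≤ m) (φ : Fin m → X → X)
    (K : X → X → ℂ) (hK : IsPD K)
    (hsub : IsPD (fun s t => pullback m φ K s t - K s t))
    (s : X) (hs : s ∈ Xfin m φ K) :
    Sser m φ K s = ⊤ ∧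
    Tendsto (fun N => resistance m φ K s N) atTop (𝓝 ⊤) ∧
    Tendsto (fun N => (resistance m φ K s N)⁻¹) atTop (𝓝 (0 : ℝ≥0∞)) := by
  obtain ⟨l, hl⟩ := hs
  have hd0 : Tendsto (fun k => diag m φ K (2 * k + 1) s - diag m φ K (2 * k) s) atTop (𝓝 0) := by
    have h1 : Tendsto (fun k : ℕ => 2 * k + 1) atTop atTop :=
      tendsto_atTop_mono (fun k => by simp only [id_eq]; omega) tendsto_id
    have h2 : Tendsto (fun k : ℕ => 2 * k) atTop atTop :=
      tendsto_atTop_mono (fun k => by simp only [id_eq]; omega) tendsto_id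
    have h3 := (hl.comp h1).sub (hl.comp h2)
    simpa using h3
  have hm1 : (1 : ℝ≥0∞) ≤ (m : ℝ≥0∞) := by exact_mod_cast hm
  have hmR : (1 : ℝ) ≤ (m : ℝ) := by exact_mod_cast hm
  have hmpos : (0 : ℝ) < m := lt_of_lt_of_le zero_lt_one hmR
  have hSser : Sser m φ K s = ⊤ := by
    by_contra h
    have hts := ENNReal.tendsto_atTop_zero_of_tsum_ne_top (f := fun k : ℕ =>
      (m : ℝ≥0∞) ^ k / ENNReal.ofReal (diag m φ K (2 * k + 1) s - diag m φ K (2 * k) s)) h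
    have hev : ∀ᶠ k : ℕ in atTop, (1 : ℝ≥0∞) ≤
        (m : ℝ≥0∞) ^ k / ENNReal.ofReal (diag m φ K (2 * k + 1) s - diag m φ K (2 * k) s) := by
      filter_upwards [hd0.eventually_lt_const zero_lt_one] with k hk
      rcases eq_or_ne (ENNReal.ofReal (diag m φ K (2 * k + 1) s - diag m φ K (2 * k) s)) 0
        with h0 | h0
      · have hmne : (m : ℝ≥0∞) ≠ 0 := by
          simp only [ne_eq, Nat.cast_eq_zero]; omega
        rw [h0, ENNReal.div_zero (pow_ne_zero _ hmne)]
        exact le_top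
      · rw [ENNReal.le_div_iff_mul_le (Or.inl h0) (Or.inl ENNReal.ofReal_ne_top), one_mul]
        calc ENNReal.ofReal (diag m φ K (2 * k + 1) s - diag m φ K (2 * k) s)
            ≤ 1 := ENNReal.ofReal_le_one.2 hk.le
          _ ≤ (m : ℝ≥0∞) ^ k := one_le_pow₀ hm1
    have hlt := hts.eventually_lt_const zero_lt_one
    obtain ⟨k, h1k, h2k⟩ := (hev.and hlt).exists
    exact absurd h1k (not_le.2 h2k)
  have hR : Tendsto (fun N => resistance m φ K s N) atTop (𝓝 ⊤) := by
    rw [ENNReal.tendsto_nhds_top_iff_nat]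
    intro M
    set ε : ℝ := ((m : ℝ) * (M + 1))⁻¹ with hεdef
    have hεpos : 0 < ε := by positivity
    obtain ⟨k0, hk0⟩ := eventually_atTop.1 (hd0.eventually_lt_const hεpos)
    filter_upwards [eventually_ge_atTop (k0 + 1)] with N hN
    have key : ∀ θ, IsUnitFlow m N θ →
        ENNReal.ofReal ((M : ℝ) + 1) ≤ energy m φ K s N θ := by
      intro θ hθf
      have hk0N : k0 < N := by omega
      have hdlt : diag m φ K (2 * k0 + 1) s - diag m φ K (2 * k0) s < ε := hk0 k0 le_rfl
      have hsum1 : ∑ p : (Fin k0 → Fin m) × Fin m, θ k0 p.1 p.2 = 1 := by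
        rw [Fintype.sum_prod_type]; exact flow_total hθf k0 hk0N
      have hcs := cs_cut (θ := fun p : (Fin k0 → Fin m) × Fin m => θ k0 p.1 p.2)
        (c := fun p : (Fin k0 → Fin m) × Fin m => incr m φ K s p.1 / (m : ℝ) ^ (k0 + 1))
        (fun p => hθf.1 k0 hk0N p.1 p.2)
        (fun p => div_nonneg (incr_nonneg hsub p.1) (by positivity))
        hsum1
      have hlev : (∑ p : (Fin k0 → Fin m) × Fin m,
          ENNReal.ofReal (θ k0 p.1 p.2) ^ 2 /
            ENNReal.ofReal (incr m φ K s p.1 / (m : ℝ) ^ (k0 + 1)))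
          ≤ energy m φ K s N θ := by
        rw [Fintype.sum_prod_type]
        exact Finset.single_le_sum
          (f := fun k => ∑ w : Fin k → Fin m, ∑ i : Fin m,
            ENNReal.ofReal (θ k w i) ^ 2 /
              ENNReal.ofReal (incr m φ K s w / (m : ℝ) ^ (k + 1)))
          (fun k _ => zero_le) (Finset.mem_range.2 hk0N)
      have hsum_incr : ∑ w : Fin k0 → Fin m, incr m φ K s w
          = diag m φ K (2 * k0 + 1) s - diag m φ K (2 * k0) s := by
        simp only [incr]
        rw [Finset.sum_sub_distrib, sum_diag k0 (k0 + 1) s, sum_diag k0 k0 s]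
        congr 2 <;> omega
      have hcond : (∑ p : (Fin k0 → Fin m) × Fin m,
          ENNReal.ofReal (incr m φ K s p.1 / (m : ℝ) ^ (k0 + 1)))
          ≤ (m : ℝ≥0∞) * ENNReal.ofReal ε := by
        calc (∑ p : (Fin k0 → Fin m) × Fin m,
            ENNReal.ofReal (incr m φ K s p.1 / (m : ℝ) ^ (k0 + 1)))
            ≤ ∑ p : (Fin k0 → Fin m) × Fin m, ENNReal.ofReal (incr m φ K s p.1) := by
              refine Finset.sum_le_sum fun p _ => ENNReal.ofReal_le_ofReal ?_
              exact div_le_self (incr_nonneg hsub p.1) (one_le_pow₀ hmR)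
          _ = ∑ w : Fin k0 → Fin m, ∑ _i : Fin m, ENNReal.ofReal (incr m φ K s w) :=
              Fintype.sum_prod_type _
          _ = ∑ w : Fin k0 → Fin m, (m : ℝ≥0∞) * ENNReal.ofReal (incr m φ K s w) := by
              simp [Finset.sum_const, nsmul_eq_mul]
          _ = (m : ℝ≥0∞) * ∑ w : Fin k0 → Fin m, ENNReal.ofReal (incr m φ K s w) := by
              rw [← Finset.mul_sum]
          _ = (m : ℝ≥0∞) * ENNReal.ofReal (∑ w : Fin k0 → Fin m, incr m φ K s w) := by
              rw [ENNReal.ofReal_sum_of_nonneg (fun w _ => incr_nonneg hsub w)]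
          _ ≤ (m : ℝ≥0∞) * ENNReal.ofReal ε := by
              rw [hsum_incr]
              exact mul_le_mul_right (ENNReal.ofReal_le_ofReal hdlt.le) _
      have hcalc : ((m : ℝ≥0∞) * ENNReal.ofReal ε)⁻¹ = ENNReal.ofReal ((M : ℝ) + 1) := by
        rw [show (m : ℝ≥0∞) = ENNReal.ofReal (m : ℝ) from (ENNReal.ofReal_natCast m).symm,
          ← ENNReal.ofReal_mul (le_of_lt hmpos)]
        have hme : (m : ℝ) * ε = ((M : ℝ) + 1)⁻¹ := by
          rw [hεdef, mul_inv]
          field_simp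
        rw [hme, ENNReal.ofReal_inv_of_pos (by positivity), inv_inv]
      calc ENNReal.ofReal ((M : ℝ) + 1) = ((m : ℝ≥0∞) * ENNReal.ofReal ε)⁻¹ := hcalc.symm
        _ ≤ (∑ p : (Fin k0 → Fin m) × Fin m,
            ENNReal.ofReal (incr m φ K s p.1 / (m : ℝ) ^ (k0 + 1)))⁻¹ :=
              ENNReal.inv_le_inv' hcond
        _ ≤ _ := le_trans hcs hlev
    have hres : ENNReal.ofReal ((M : ℝ) + 1) ≤ resistance m φ K s N :=
      le_iInf fun θ => le_iInf fun hθf => key θ hθf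
    calc (M : ℝ≥0∞) < ENNReal.ofReal ((M : ℝ) + 1) := by
          rw [show ((M : ℝ) + 1) = ((M + 1 : ℕ) : ℝ) by push_cast; ring,
            ENNReal.ofReal_natCast]
          exact_mod_cast Nat.lt_succ_self M
      _ ≤ resistance m φ K s N := hres
  exact ⟨hSser, hR, by simpa using ENNReal.tendsto_inv_iff.2 hR⟩
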